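/- Let G be a graph with Δ(G) ≤ k − 1, k ≥ 11, having no nice k-coloring but such that every proper subgraph has one. Suppose u is a 2-vertex of G with neighbors x and y, and ψ is a nice k-coloring of G − uy with ψ(ux) = a. Then a is the unique color in {1,...,k} missing at y (not used on y or any edge at y). -/

import Mathlib

open SimpleGraph

/-- The degree of a vertex `v` in a graph `G` (number of neighbors). -/
noncomputable def deg {V : Type*} (G : SimpleGraph V) (v : V) : ℕ :=
  (G.neighborSet v).ncard

/-- The maximum degree `Δ(G)` of a finite graph. -/
noncomputable def maxDeg {V : Type*} [Fintype V] (G : SimpleGraph V) : ℕ :=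
  Finset.univ.sup (deg G)

/-- A total `k`-coloring of `G`: a coloring of vertices (`cv`) and edges (`ce`) with `k`
colors such that no two adjacent vertices, no two incident edges, and no vertex and
incident edge receive the same color. -/
def IsTotalColoring {V : Type*} (G : SimpleGraph V) (k : ℕ)
    (cv : V → Fin k) (ce : Sym2 V → Fin k) : Prop :=
  (∀ u v, G.Adj u v → cv u ≠ cv v) ∧
  (∀ u v w, G.Adj u v → G.Adj u w → v ≠ w → ce s(u, v) ≠ ce s(u, w)) ∧
  (∀ u v, G.Adj u v → cv u ≠ ce s(u, v))

def HasTotalColoring {V : Type*} (G : SimpleGraph V) (k : ℕ) : Prop :=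
  ∃ cv ce, IsTotalColoring G k cv ce

/-- The total chromatic number `χ''(G)`: the least `k` admitting a total `k`-coloring. -/
noncomputable def totalChromaticNumber {V : Type*} (G : SimpleGraph V) : ℕ :=
  sInf {k | HasTotalColoring G k}

/-- `H` is a minor of `G`: there are pairwise disjoint nonempty connected branch sets in `G`,
one for each vertex of `H`, with an edge of `G` between the branch sets of any two
vertices adjacent in `H`. -/
def HasMinor {V W : Type*} (G : SimpleGraph V) (H : SimpleGraph W) : Prop :=
  ∃ φ : W → Set V,
    (∀ w, (G.induce (φ w)).Connected) ∧
    (∀ w₁ w₂, w₁ ≠ w₂ → Disjoint (φ w₁) (φ w₂)) ∧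
    (∀ w₁ w₂, H.Adj w₁ w₂ → ∃ u ∈ φ w₁, ∃ v ∈ φ w₂, G.Adj u v)

abbrev K5 : SimpleGraph (Fin 5) := ⊤

abbrev K33 : SimpleGraph (Fin 3 ⊕ Fin 3) := completeBipartiteGraph (Fin 3) (Fin 3)

/-- A nice `k`-coloring: a proper coloring of all edges and of all vertices of degree at
least `6`, such that no two adjacent or incident colored elements share a color. -/
def IsNiceColoring {V : Type*} (G : SimpleGraph V) (k : ℕ)
    (cv : V → Fin k) (ce : Sym2 V → Fin k) : Prop :=
  (∀ u v, G.Adj u v → 6 ≤ deg G u → 6 ≤ deg G v → cv u ≠ cv v) ∧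
  (∀ u v w, G.Adj u v → G.Adj u w → v ≠ w → ce s(u, v) ≠ ce s(u, w)) ∧
  (∀ u v, G.Adj u v → 6 ≤ deg G u → cv u ≠ ce s(u, v))

def HasNiceColoring {V : Type*} (G : SimpleGraph V) (k : ℕ) : Prop :=
  ∃ cv ce, IsNiceColoring G k cv ce

/-- A color `c` is missing at `v` if it is used neither on `v` (when `v` is colored,
i.e. has degree at least 6) nor on any edge incident with `v`. -/
def MissingAt {V : Type*} {k : ℕ} (G : SimpleGraph V)
    (cv : V → Fin k) (ce : Sym2 V → Fin k) (v : V) (c : Fin k) : Prop :=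
  (6 ≤ deg G v → cv v ≠ c) ∧ ∀ w, G.Adj v w → ce s(v, w) ≠ c

/-- `G` is planar: it has a drawing in the plane with injective vertex placement and
edges drawn as arcs whose interiors are pairwise disjoint and avoid all vertex points. -/
def IsPlanar {V : Type*} (G : SimpleGraph V) : Prop :=
  ∃ (p : V → ℝ × ℝ) (γ : G.edgeSet → ℝ → ℝ × ℝ),
    Function.Injective p ∧
    (∀ e, ContinuousOn (γ e) (Set.Icc 0 1)) ∧
    (∀ e, Set.InjOn (γ e) (Set.Icc 0 1)) ∧
    (∀ e : G.edgeSet, ∀ u v : V, (e : Sym2 V) = s(u, v) →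
      ({γ e 0, γ e 1} : Set (ℝ × ℝ)) = {p u, p v}) ∧
    (∀ e : G.edgeSet, ∀ w : V, ∀ t ∈ Set.Ioo (0 : ℝ) 1, γ e t ≠ p w) ∧
    (∀ e₁ e₂ : G.edgeSet, e₁ ≠ e₂ → ∀ s ∈ Set.Ioo (0 : ℝ) 1, ∀ t ∈ Set.Ioo (0 : ℝ) 1,
      γ e₁ s ≠ γ e₂ t)

/-- A planar triangulation, i.e. an edge-maximal planar graph. -/
def IsPlanarTriangulation {W : Type*} (H : SimpleGraph W) : Prop :=
  IsPlanar H ∧ ∀ H' : SimpleGraph W, H < H' → ¬ IsPlanar H'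

/-- The Wagner graph `V₈`: the 8-cycle together with its four main diagonals. -/
def wagnerGraph : SimpleGraph (ZMod 8) :=
  SimpleGraph.fromRel (fun i j => j = i + 1 ∨ j = i + 4)



private lemma exists_color_notin {k : ℕ} (s : Finset (Fin k)) (h : s.card < k) :
    ∃ c : Fin k, c ∉ s := by
  by_contra h'
  push_neg at h'
  have hle : (Finset.univ : Finset (Fin k)).card ≤ s.card :=
    Finset.card_le_card fun c _ => h' c
  simp only [Finset.card_univ, Fintype.card_fin] at hle
  omega

/-- Claim 1(i): if `G` is a minimal graph with no nice `k`-coloring, `u` is a `2`-vertex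
with neighbors `x` and `y`, and `ψ = (cv, ce)` is a nice `k`-coloring of `G - uy` with
`ce(ux) = a`, then `a` is the unique color missing at `y`. -/
theorem unique_missing_color {V : Type*} [Fintype V] (G : SimpleGraph V) (k : ℕ)
    (hk : 11 ≤ k) (hΔ : maxDeg G ≤ k - 1)
    (hG : ¬ HasNiceColoring G k)
    (hmin : ∀ H : SimpleGraph V, H < G → HasNiceColoring H k)
    (u x y : V) (hux : G.Adj u x) (huy : G.Adj u y) (hxy : x ≠ y)
    (hu2 : deg G u = 2)
    (cv : V → Fin k) (ce : Sym2 V → Fin k)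
    (hψ : IsNiceColoring (G.deleteEdges {s(u, y)}) k cv ce)
    (a : Fin k) (ha : ce s(u, x) = a) :
    ∀ c : Fin k, MissingAt (G.deleteEdges {s(u, y)}) cv ce y c ↔ c = a := by
  classical
  have hyu : y ≠ u := huy.ne'
  have huy' : u ≠ y := huy.ne
  set G' := G.deleteEdges {s(u, y)} with hG'def
  have hsyw : ∀ w : V, w ≠ u → s(y, w) ≠ s(u, y) := by
    intro w hw hc
    rcases Sym2.eq_iff.1 hc with ⟨h1, _⟩ | ⟨_, h2⟩
    · exact hyu h1
    · exact hw h2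
  have hs_eq : ∀ w : V, s(y, w) = s(u, y) → w = u := by
    intro w h
    rcases Sym2.eq_iff.1 h with ⟨h1, _⟩ | ⟨_, h2⟩
    · exact absurd h1 hyu
    · exact h2
  have hsvw : ∀ v w : V, v ≠ u → v ≠ y → s(v, w) ≠ s(u, y) := by
    intro v w h1 h2 hc
    rcases Sym2.eq_iff.1 hc with ⟨hv, _⟩ | ⟨hv, _⟩
    · exact h1 hv
    · exact h2 hv
  have hadj' : ∀ v w : V, G'.Adj v w ↔ G.Adj v w ∧ s(v, w) ≠ s(u, y) := by
    intro v w
    rw [hG'def, SimpleGraph.deleteEdges_adj]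
    simp only [Set.mem_singleton_iff]
  have hG'adj : ∀ {v w : V}, G.Adj v w → s(v, w) ≠ s(u, y) → G'.Adj v w := by
    intro v w h hne
    exact (hadj' v w).2 ⟨h, hne⟩
  have hdeg_le : ∀ v : V, deg G v ≤ k - 1 := fun v =>
    le_trans (Finset.le_sup (f := deg G) (Finset.mem_univ v)) hΔ
  have hNS : ∀ v : V, v ≠ u → v ≠ y → G'.neighborSet v = G.neighborSet v := by
    intro v hvu hvy
    ext w
    simp only [SimpleGraph.mem_neighborSet, hadj']
    exact ⟨fun h => h.1, fun h => ⟨h, hsvw v w hvu hvy⟩⟩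
  have hdeg_eq : ∀ v : V, v ≠ u → v ≠ y → deg G' v = deg G v := by
    intro v hvu hvy
    unfold deg
    rw [hNS v hvu hvy]
  have hNSy : G'.neighborSet y = G.neighborSet y \ {u} := by
    ext w
    simp only [SimpleGraph.mem_neighborSet, hadj', Set.mem_diff, Set.mem_singleton_iff]
    constructor
    · rintro ⟨h, h2⟩
      exact ⟨h, fun hwu => h2 (by rw [hwu]; exact Sym2.eq_swap)⟩
    · rintro ⟨h, hwu⟩
      exact ⟨h, hsyw w hwu⟩
  have hdegy' : deg G' y = deg G y - 1 := by
    unfold deg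
    rw [hNSy]
    exact Set.ncard_diff_singleton_of_mem huy.symm
  have hfinNy : (G.neighborSet y).Finite := Set.toFinite _
  set Ny : Finset V := hfinNy.toFinset with hNydef
  have hmemNy : ∀ w, w ∈ Ny ↔ G.Adj y w := fun w => by
    rw [hNydef, Set.Finite.mem_toFinset, SimpleGraph.mem_neighborSet]
  have hcardNy : Ny.card = deg G y := by
    rw [hNydef, deg, Set.ncard_eq_toFinset_card]
  have hu_mem_Ny : u ∈ Ny := (hmemNy u).2 huy.symm
  have hcard_erase : (Ny.erase u).card = deg G y - 1 := by
    rw [Finset.card_erase_of_mem hu_mem_Ny, hcardNy]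
  have hNu : ∀ w, G.Adj u w → w = x ∨ w = y := by
    intro w hw
    have hfin : (G.neighborSet u).Finite := Set.toFinite _
    have hsub : ({x, y} : Finset V) ⊆ hfin.toFinset := by
      intro z hz
      simp only [Finset.mem_insert, Finset.mem_singleton] at hz
      rcases hz with rfl | rfl
      · simpa [Set.Finite.mem_toFinset] using hux
      · simpa [Set.Finite.mem_toFinset] using huy
    have hcard : hfin.toFinset.card = 2 := by
      rw [← Set.ncard_eq_toFinset_card]; exact hu2
    have heq : ({x, y} : Finset V) = hfin.toFinset :=
      Finset.eq_of_subset_of_card_le hsub (by rw [hcard, Finset.card_pair hxy])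
    have : w ∈ ({x, y} : Finset V) := by
      rw [heq]; simpa [Set.Finite.mem_toFinset] using hw
    simpa using this
  set E : Finset (Fin k) := (Ny.erase u).image (fun w => ce s(y, w)) with hEdef
  have hE_mem : ∀ w, G.Adj y w → w ≠ u → ce s(y, w) ∈ E := by
    intro w h hne
    exact Finset.mem_image_of_mem _ (Finset.mem_erase.2 ⟨hne, (hmemNy w).2 h⟩)
  by_cases hy7 : 7 ≤ deg G y
  · -- Case B : deg G y ≥ 7
    have hdeg'y6 : 6 ≤ deg G' y := by rw [hdegy']; omega
    have key : ∀ c : Fin k, MissingAt G' cv ce y c → c = a := by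
      intro c hc
      by_contra hca
      apply hG
      refine ⟨cv, fun e => if e = s(u, y) then c else ce e, ?_, ?_, ?_⟩
      · intro v w hvw h6v h6w
        have hvu : v ≠ u := by rintro rfl; rw [hu2] at h6v; omega
        have hwu : w ≠ u := by rintro rfl; rw [hu2] at h6w; omega
        refine hψ.1 v w (hG'adj hvw ?_) ?_ ?_
        · intro hcon
          rcases Sym2.eq_iff.1 hcon with ⟨hv, _⟩ | ⟨_, hw⟩
          · exact hvu hv
          · exact hwu hw
        · by_cases hvy : v = y
          · rw [hvy]; exact hdeg'y6
          · rw [hdeg_eq v hvu hvy]; exact h6v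
        · by_cases hwy : w = y
          · rw [hwy]; exact hdeg'y6
          · rw [hdeg_eq w hwu hwy]; exact h6w
      · intro v w₁ w₂ h1 h2 hne
        by_cases e1 : s(v, w₁) = s(u, y)
        · have e2 : s(v, w₂) ≠ s(u, y) := by
            intro e2
            rcases Sym2.eq_iff.1 e1 with ⟨hv1, hw1⟩ | ⟨hv1, hw1⟩ <;>
              rcases Sym2.eq_iff.1 e2 with ⟨hv2, hw2⟩ | ⟨hv2, hw2⟩
            · exact hne (hw1.trans hw2.symm)
            · exact huy' (hv1.symm.trans hv2)
            · exact huy' (hv2.symm.trans hv1)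
            · exact hne (hw1.trans hw2.symm)
          simp only [if_pos e1, if_neg e2]
          rcases Sym2.eq_iff.1 e1 with ⟨hv, hw⟩ | ⟨hv, hw⟩
          · -- v = u, w₁ = y
            have hw2 : w₂ = x :=
              (hNu w₂ (by rw [← hv]; exact h2)).resolve_right
                (fun h => hne (hw.trans h.symm))
            rw [hv, hw2, ha]
            exact hca
          · -- v = y, w₁ = u
            have hw2u : w₂ ≠ u := fun h => hne (hw.trans h.symm)
            rw [hv]
            intro h
            exact hc.2 w₂ (hG'adj (by rw [← hv]; exact h2) (hsyw w₂ hw2u)) h.symm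
        · by_cases e2 : s(v, w₂) = s(u, y)
          · simp only [if_neg e1, if_pos e2]
            rcases Sym2.eq_iff.1 e2 with ⟨hv, hw⟩ | ⟨hv, hw⟩
            · have hw1 : w₁ = x :=
                (hNu w₁ (by rw [← hv]; exact h1)).resolve_right
                  (fun h => hne (h.trans hw.symm))
              rw [hv, hw1, ha]
              exact Ne.symm hca
            · have hw1u : w₁ ≠ u := fun h => hne (h.trans hw.symm)
              rw [hv]
              intro h
              exact hc.2 w₁ (hG'adj (by rw [← hv]; exact h1) (hsyw w₁ hw1u)) h
          · simp only [if_neg e1, if_neg e2]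
            exact hψ.2.1 v w₁ w₂ (hG'adj h1 e1) (hG'adj h2 e2) hne
      · intro v w hvw h6
        have hvu : v ≠ u := by rintro rfl; rw [hu2] at h6; omega
        by_cases he : s(v, w) = s(u, y)
        · simp only [if_pos he]
          have hvy : v = y := by
            rcases Sym2.eq_iff.1 he with ⟨hv, _⟩ | ⟨hv, _⟩
            · exact absurd hv hvu
            · exact hv
          rw [hvy]
          exact hc.1 hdeg'y6
        · simp only [if_neg he]
          refine hψ.2.2 v w (hG'adj hvw he) ?_
          by_cases hvy : v = y
          · rw [hvy]; exact hdeg'y6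
          · rw [hdeg_eq v hvu hvy]; exact h6
    obtain ⟨c₀, hc₀⟩ := exists_color_notin (insert (cv y) E) (by
      have h1 : E.card ≤ deg G y - 1 :=
        le_trans Finset.card_image_le (le_of_eq hcard_erase)
      have h2 : (insert (cv y) E).card ≤ E.card + 1 := Finset.card_insert_le _ _
      have h3 := hdeg_le y
      omega)
    have hmiss : MissingAt G' cv ce y c₀ := by
      constructor
      · intro _ heq
        exact hc₀ (by rw [← heq]; exact Finset.mem_insert_self _ _)
      · intro w hw heq
        have hw' := (hadj' y w).1 hw
        have hwu : w ≠ u := fun h => hw'.2 (by rw [h]; exact Sym2.eq_swap)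
        exact hc₀ (Finset.mem_insert_of_mem (by rw [← heq]; exact hE_mem w hw'.1 hwu))
    have ha_miss : MissingAt G' cv ce y a := by rw [← key c₀ hmiss]; exact hmiss
    intro c
    exact ⟨key c, fun h => by rw [h]; exact ha_miss⟩
  · -- Case A : deg G y ≤ 6, build a nice coloring of G directly
    exfalso
    push_neg at hy7
    have hle5 : (Ny.erase u).card ≤ 5 := by omega
    set Vc : Finset (Fin k) := (Ny.erase u).image cv with hVcdef
    have hVc_mem : ∀ w, G.Adj y w → w ≠ u → cv w ∈ Vc := by
      intro w h hne
      exact Finset.mem_image_of_mem _ (Finset.mem_erase.2 ⟨hne, (hmemNy w).2 h⟩)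
    obtain ⟨b, hb⟩ := exists_color_notin (Vc ∪ E) (by
      have h1 : Vc.card ≤ 5 := le_trans Finset.card_image_le hle5
      have h2 : E.card ≤ 5 := le_trans Finset.card_image_le hle5
      have h3 : (Vc ∪ E).card ≤ Vc.card + E.card := Finset.card_union_le _ _
      omega)
    obtain ⟨c', hc'⟩ := exists_color_notin (E ∪ {a, b}) (by
      have h2 : E.card ≤ 5 := le_trans Finset.card_image_le hle5
      have h3 : (E ∪ {a, b}).card ≤ E.card + ({a, b} : Finset (Fin k)).card :=
        Finset.card_union_le _ _
      have h4 : ({a, b} : Finset (Fin k)).card ≤ 2 := Finset.card_insert_le _ _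
      omega)
    have hbVc : b ∉ Vc := fun h => hb (Finset.mem_union_left _ h)
    have hbE : b ∉ E := fun h => hb (Finset.mem_union_right _ h)
    have hc'E : c' ∉ E := fun h => hc' (Finset.mem_union_left _ h)
    have hc'a : c' ≠ a := fun h => hc' (Finset.mem_union_right _ (by simp [h]))
    have hc'b : c' ≠ b := fun h => hc' (Finset.mem_union_right _ (by simp [h]))
    apply hG
    refine ⟨fun v => if v = y then b else cv v, fun e => if e = s(u, y) then c' else ce e,
      ?_, ?_, ?_⟩
    · intro v w hvw h6v h6w
      have hvu : v ≠ u := by rintro rfl; rw [hu2] at h6v; omega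
      have hwu : w ≠ u := by rintro rfl; rw [hu2] at h6w; omega
      by_cases hvy : v = y
      · have hwy : w ≠ y := by
          intro h
          rw [hvy, h] at hvw
          exact G.loopless.irrefl _ hvw
        simp only [if_pos hvy, if_neg hwy]
        intro h
        exact hbVc (by rw [h]; exact hVc_mem w (by rw [← hvy]; exact hvw) hwu)
      · by_cases hwy : w = y
        · simp only [if_neg hvy, if_pos hwy]
          intro h
          exact hbVc (by rw [← h]; exact hVc_mem v (by rw [← hwy]; exact hvw.symm) hvu)
        · simp only [if_neg hvy, if_neg hwy]
          exact hψ.1 v w (hG'adj hvw (hsvw v w hvu hvy))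
            (by rw [hdeg_eq v hvu hvy]; exact h6v)
            (by rw [hdeg_eq w hwu hwy]; exact h6w)
    · intro v w₁ w₂ h1 h2 hne
      by_cases e1 : s(v, w₁) = s(u, y)
      · have e2 : s(v, w₂) ≠ s(u, y) := by
          intro e2
          rcases Sym2.eq_iff.1 e1 with ⟨hv1, hw1⟩ | ⟨hv1, hw1⟩ <;>
            rcases Sym2.eq_iff.1 e2 with ⟨hv2, hw2⟩ | ⟨hv2, hw2⟩
          · exact hne (hw1.trans hw2.symm)
          · exact huy' (hv1.symm.trans hv2)
          · exact huy' (hv2.symm.trans hv1)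
          · exact hne (hw1.trans hw2.symm)
        simp only [if_pos e1, if_neg e2]
        rcases Sym2.eq_iff.1 e1 with ⟨hv, hw⟩ | ⟨hv, hw⟩
        · have hw2 : w₂ = x :=
            (hNu w₂ (by rw [← hv]; exact h2)).resolve_right
              (fun h => hne (hw.trans h.symm))
          rw [hv, hw2, ha]
          exact hc'a
        · have hw2u : w₂ ≠ u := fun h => hne (hw.trans h.symm)
          rw [hv]
          intro h
          exact hc'E (by rw [h]; exact hE_mem w₂ (by rw [← hv]; exact h2) hw2u)
      · by_cases e2 : s(v, w₂) = s(u, y)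
        · simp only [if_neg e1, if_pos e2]
          rcases Sym2.eq_iff.1 e2 with ⟨hv, hw⟩ | ⟨hv, hw⟩
          · have hw1 : w₁ = x :=
              (hNu w₁ (by rw [← hv]; exact h1)).resolve_right
                (fun h => hne (h.trans hw.symm))
            rw [hv, hw1, ha]
            exact Ne.symm hc'a
          · have hw1u : w₁ ≠ u := fun h => hne (h.trans hw.symm)
            rw [hv]
            intro h
            exact hc'E (by rw [← h]; exact hE_mem w₁ (by rw [← hv]; exact h1) hw1u)
        · simp only [if_neg e1, if_neg e2]
          exact hψ.2.1 v w₁ w₂ (hG'adj h1 e1) (hG'adj h2 e2) hne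
    · intro v w hvw h6
      have hvu : v ≠ u := by rintro rfl; rw [hu2] at h6; omega
      by_cases hvy : v = y
      · simp only [if_pos hvy]
        by_cases hwu : w = u
        · have heq : s(v, w) = s(u, y) := by rw [hvy, hwu]; exact Sym2.eq_swap
          rw [if_pos heq]
          exact fun h => hc'b h.symm
        · have hne' : s(v, w) ≠ s(u, y) := by rw [hvy]; exact hsyw w hwu
          rw [if_neg hne']
          intro h
          exact hbE (by rw [h, hvy]; exact hE_mem w (by rw [← hvy]; exact hvw) hwu)
      · simp only [if_neg hvy, if_neg (hsvw v w hvu hvy)]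
        exact hψ.2.2 v w (hG'adj hvw (hsvw v w hvu hvy))
          (by rw [hdeg_eq v hvu hvy]; exact h6)
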